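/- Let R be a ring and let J be an injective cogenerator of the category of left R-modules. A morphism q : X ⟶ Y of chain complexes of left R-modules is a quasi-isomorphism if and only if the induced morphism of cochain complexes q* : Hom_R(Y, J) ⟶ Hom_R(X, J) is a quasi-isomorphism. -/

import Mathlib

open CategoryTheory

universe u

variable {R : Type u} [Ring R]

/-- Precomposition with a morphism of `R`-modules, as a morphism of abelian groups
between the `Hom`-groups with values in an `R`-module `M`. -/
def precompHom {A B : ModuleCat.{u} R} (f : A ⟶ B) (M : ModuleCat.{u} R) :
    AddCommGrpCat.of (B →ₗ[R] M) ⟶ AddCommGrpCat.of (A →ₗ[R] M) :=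
  AddCommGrpCat.ofHom
    { toFun := fun φ => φ.comp f.hom
      map_zero' := LinearMap.zero_comp f.hom
      map_add' := fun φ ψ => LinearMap.add_comp f.hom ψ φ }

lemma precompHom_zero {A B : ModuleCat.{u} R} (M : ModuleCat.{u} R) :
    precompHom (0 : A ⟶ B) M = 0 := by
  ext φ
  first
  | simp [precompHom]
  | exact LinearMap.comp_zero (φ : B →ₗ[R] M)
  | rfl

lemma precompHom_comp {A B C : ModuleCat.{u} R} (f : A ⟶ B) (g : B ⟶ C)
    (M : ModuleCat.{u} R) :
    precompHom (f ≫ g) M = precompHom g M ≫ precompHom f M := by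
  ext φ
  rfl

/-- The Hom complex `Hom_R(X, M)` of a chain complex `X` of `R`-modules with values in an
`R`-module `M`: the cochain complex of abelian groups whose degree `n` component is
`Hom_R(X_n, M)`, with differentials given by precomposition with the differentials of `X`. -/
noncomputable def homComplex (X : ChainComplex (ModuleCat.{u} R) ℤ) (M : ModuleCat.{u} R) :
    CochainComplex AddCommGrpCat.{u} ℤ where
  X n := AddCommGrpCat.of (X.X n →ₗ[R] M)
  d n m := precompHom (X.d m n) M
  shape n m h := by
    rw [X.shape m n h, precompHom_zero]
  d_comp_d' i j l _ _ := by
    rw [← precompHom_comp, X.d_comp_d, precompHom_zero]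

/-- The morphism of Hom complexes `Hom_R(Y, M) ⟶ Hom_R(X, M)` induced by precomposition with a
morphism of chain complexes `q : X ⟶ Y`. -/
noncomputable def homComplexMap {X Y : ChainComplex (ModuleCat.{u} R) ℤ} (q : X ⟶ Y)
    (M : ModuleCat.{u} R) : homComplex Y M ⟶ homComplex X M where
  f n := precompHom (q.f n) M
  comm' n m _ := by
    dsimp [homComplex]
    rw [← precompHom_comp, ← precompHom_comp, q.comm]

section Auxiliary

open CategoryTheory.ShortComplex

variable {R : Type} [Ring R]

lemma precompHom_apply {A B : ModuleCat.{0} R} (f : A ⟶ B) (M : ModuleCat.{0} R)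
    (φ : B →ₗ[R] M) : precompHom f M φ = φ.comp f.hom := rfl

/-- The short complex of abelian groups dual to a short complex of `R`-modules. -/
noncomputable def dualSC (S : ShortComplex (ModuleCat.{0} R)) (M : ModuleCat.{0} R) :
    ShortComplex AddCommGrpCat.{0} :=
  ShortComplex.mk (precompHom S.g M) (precompHom S.f M)
    (by rw [← precompHom_comp, S.zero, precompHom_zero])

/-- The dual morphism of short complexes. -/
noncomputable def dualSCMap {S₁ S₂ : ShortComplex (ModuleCat.{0} R)} (φ : S₁ ⟶ S₂)
    (M : ModuleCat.{0} R) : dualSC S₂ M ⟶ dualSC S₁ M where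
  τ₁ := precompHom φ.τ₃ M
  τ₂ := precompHom φ.τ₂ M
  τ₃ := precompHom φ.τ₁ M
  comm₁₂ := by
    dsimp [dualSC]
    rw [← precompHom_comp, ← precompHom_comp, φ.comm₂₃]
  comm₂₃ := by
    dsimp [dualSC]
    rw [← precompHom_comp, ← precompHom_comp, φ.comm₁₂]

section ModuleSide

/-- The concrete homology of a short complex of modules. -/
abbrev _root_.CategoryTheory.ShortComplex.moduleCatHomology (S : ShortComplex (ModuleCat.{0} R)) :=
  LinearMap.ker S.g.hom ⧸ LinearMap.range S.moduleCatToCycles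

variable {S₁ S₂ : ShortComplex (ModuleCat.{0} R)} (φ : S₁ ⟶ S₂)

lemma tau₂_g_apply (x : S₁.X₂) : S₂.g (φ.τ₂ x) = φ.τ₃ (S₁.g x) := by
  have h : (φ.τ₂ ≫ S₂.g) x = (S₁.g ≫ φ.τ₃) x := by rw [φ.comm₂₃]
  simpa using h

lemma tau₂_f_apply (a : S₁.X₁) : φ.τ₂ (S₁.f a) = S₂.f (φ.τ₁ a) := by
  have h : (S₁.f ≫ φ.τ₂) a = (φ.τ₁ ≫ S₂.f) a := by rw [φ.comm₁₂]
  simpa using h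

/-- The induced map on cycles. -/
noncomputable def cycMap : LinearMap.ker S₁.g.hom →ₗ[R] LinearMap.ker S₂.g.hom :=
  φ.τ₂.hom.restrict (p := LinearMap.ker S₁.g.hom) (q := LinearMap.ker S₂.g.hom) (fun x hx => by
    rw [LinearMap.mem_ker] at hx ⊢
    rw [tau₂_g_apply, hx, map_zero])

@[simp] lemma cycMap_coe (x : LinearMap.ker S₁.g.hom) : (cycMap φ x : S₂.X₂) = φ.τ₂ x := rfl

/-- The induced map on concrete homology of short complexes of modules. -/
noncomputable def hMap : S₁.moduleCatHomology →ₗ[R] S₂.moduleCatHomology :=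
  Submodule.mapQ _ _ (cycMap φ) (by
    rintro _ ⟨a, rfl⟩
    exact ⟨φ.τ₁ a, Subtype.ext (tau₂_f_apply φ a).symm⟩)

@[simp] lemma hMap_mk (x : LinearMap.ker S₁.g.hom) :
    hMap φ (Submodule.Quotient.mk x) = Submodule.Quotient.mk (cycMap φ x) := rfl

/-- Left homology map data for `φ` relative to the concrete left homology data. -/
noncomputable def lhmdModule :
    CategoryTheory.ShortComplex.LeftHomologyMapData φ S₁.moduleCatLeftHomologyData
      S₂.moduleCatLeftHomologyData where
  φK := ModuleCat.ofHom (cycMap φ)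
  φH := ModuleCat.ofHom (hMap φ)
  commi := by ext x; rfl
  commf' := by
    ext a
    apply Subtype.ext
    show φ.τ₂ (S₁.f a) = S₂.f (φ.τ₁ a)
    exact tau₂_f_apply φ a
  commπ := by ext x; rfl

lemma quasiIso_iff_bijective_hMap :
    CategoryTheory.ShortComplex.QuasiIso φ ↔ Function.Bijective (hMap φ) := by
  rw [(lhmdModule φ).quasiIso_iff]
  exact CategoryTheory.ConcreteCategory.isIso_iff_bijective _

end ModuleSide

end Auxiliary

section AbSide

open CategoryTheory.ShortComplex

variable {T₁ T₂ : CategoryTheory.ShortComplex AddCommGrpCat.{0}} (ψ : T₁ ⟶ T₂)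

lemma ab_tau₂_g_apply (x : T₁.X₂) : T₂.g (ψ.τ₂ x) = ψ.τ₃ (T₁.g x) := by
  have h : (ψ.τ₂ ≫ T₂.g) x = (T₁.g ≫ ψ.τ₃) x := by rw [ψ.comm₂₃]
  simpa using h

lemma ab_tau₂_f_apply (a : T₁.X₁) : ψ.τ₂ (T₁.f a) = T₂.f (ψ.τ₁ a) := by
  have h : (T₁.f ≫ ψ.τ₂) a = (ψ.τ₁ ≫ T₂.f) a := by rw [ψ.comm₁₂]
  simpa using h

/-- The induced map on cycles, for short complexes of abelian groups. -/
noncomputable def cycMapAb : AddMonoidHom.ker T₁.g.hom →+ AddMonoidHom.ker T₂.g.hom :=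
  AddMonoidHom.codRestrict (ψ.τ₂.hom.comp (AddMonoidHom.ker T₁.g.hom).subtype) _ (fun x => by
    have hx : T₁.g x.1 = 0 := x.2
    simp only [AddMonoidHom.coe_comp, Function.comp_apply, AddSubgroup.coe_subtype,
      AddMonoidHom.mem_ker]
    rw [ab_tau₂_g_apply, hx, map_zero])

@[simp] lemma cycMapAb_coe (x : AddMonoidHom.ker T₁.g.hom) : (cycMapAb ψ x : T₂.X₂) = ψ.τ₂ x := rfl

/-- The induced map on concrete homology of short complexes of abelian groups. -/
noncomputable def hMapAb :
    (AddMonoidHom.ker T₁.g.hom ⧸ AddMonoidHom.range T₁.abToCycles) →+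
      (AddMonoidHom.ker T₂.g.hom ⧸ AddMonoidHom.range T₂.abToCycles) :=
  QuotientAddGroup.map _ _ (cycMapAb ψ) (by
    rintro _ ⟨a, rfl⟩
    exact ⟨ψ.τ₁ a, Subtype.ext (by simp [ab_tau₂_f_apply])⟩)

@[simp] lemma hMapAb_mk (x : AddMonoidHom.ker T₁.g.hom) :
    hMapAb ψ (QuotientAddGroup.mk x) = QuotientAddGroup.mk (cycMapAb ψ x) := rfl

/-- Left homology map data for `ψ` relative to the concrete left homology data. -/
noncomputable def lhmdAb :
    CategoryTheory.ShortComplex.LeftHomologyMapData ψ T₁.abLeftHomologyData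
      T₂.abLeftHomologyData where
  φK := AddCommGrpCat.ofHom (cycMapAb ψ)
  φH := AddCommGrpCat.ofHom (hMapAb ψ)
  commi := by ext x; rfl
  commf' := by
    ext a
    apply Subtype.ext
    simp only [abLeftHomologyData_f']
    show ψ.τ₂ (T₁.f a) = T₂.f (ψ.τ₁ a)
    exact ab_tau₂_f_apply ψ a
  commπ := by ext x; rfl

lemma ab_quasiIso_iff_bijective_hMapAb :
    CategoryTheory.ShortComplex.QuasiIso ψ ↔ Function.Bijective (hMapAb ψ) := by
  rw [(lhmdAb ψ).quasiIso_iff]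
  exact CategoryTheory.ConcreteCategory.isIso_iff_bijective _

end AbSide

section Core

open CategoryTheory.ShortComplex

variable {R : Type} [Ring R] {J : Type} [AddCommGroup J] [Module R J]

/-- The linear map on concrete homology induced by a cocycle of the dual complex. -/
noncomputable def eAux (S : CategoryTheory.ShortComplex (ModuleCat.{0} R))
    (ψ : S.X₂ →ₗ[R] J) (hψ : ψ.comp S.f.hom = 0) : S.moduleCatHomology →ₗ[R] J :=
  Submodule.liftQ _ (ψ.comp (LinearMap.ker S.g.hom).subtype) (by
    rintro _ ⟨a, rfl⟩
    rw [LinearMap.mem_ker]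
    show ψ (S.f a) = 0
    exact LinearMap.congr_fun hψ a)

/-- `eAux`, as an additive map on the group of cocycles of the dual complex. -/
noncomputable def eHom (S : CategoryTheory.ShortComplex (ModuleCat.{0} R)) :
    (AddMonoidHom.ker (dualSC S (ModuleCat.of R J)).g.hom) →+ (S.moduleCatHomology →ₗ[R] J) where
  toFun ψ := eAux S ψ.1 (by have := ψ.2; rwa [AddMonoidHom.mem_ker] at this)
  map_zero' := by
    apply Submodule.linearMap_qext
    ext x
    rfl
  map_add' ψ χ := by
    apply Submodule.linearMap_qext
    ext x
    rfl

/-- The comparison map between the homology of the dual complex and the dual of homology. -/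
noncomputable def eQuot (S : CategoryTheory.ShortComplex (ModuleCat.{0} R)) :
    (AddMonoidHom.ker (dualSC S (ModuleCat.of R J)).g.hom ⧸
      AddMonoidHom.range (dualSC S (ModuleCat.of R J)).abToCycles) →+
      (S.moduleCatHomology →ₗ[R] J) :=
  QuotientAddGroup.lift _ (eHom S) (by
    rintro _ ⟨χ, rfl⟩
    apply Submodule.linearMap_qext
    ext x
    have hx : S.g x.1 = 0 := x.2
    let χ' : S.X₃ →ₗ[R] J := χ
    show χ' (S.g x.1) = 0
    rw [hx, map_zero])

lemma eQuot_injective (hJinj : Module.Injective R J)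
    (S : CategoryTheory.ShortComplex (ModuleCat.{0} R)) :
    Function.Injective (eQuot (J := J) S) := by
  rw [injective_iff_map_eq_zero]
  intro a ha
  induction a using QuotientAddGroup.induction_on with
  | H ψ =>
    let ψ' : S.X₂ →ₗ[R] J := ψ.1
    have hv : ∀ x : LinearMap.ker S.g.hom, ψ' x = 0 := by
      intro x
      exact LinearMap.congr_fun ha (Submodule.Quotient.mk x)
    have hker : LinearMap.ker S.g.hom ≤ LinearMap.ker ψ' := fun x hx => hv ⟨x, hx⟩
    let k : (S.X₂ ⧸ LinearMap.ker S.g.hom) →ₗ[R] J := Submodule.liftQ _ ψ' hker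
    let e₀ := LinearMap.quotKerEquivRange S.g.hom
    let m : LinearMap.range S.g.hom →ₗ[R] J := k.comp (e₀.symm : _ →ₗ[R] _)
    obtain ⟨χ, hχ⟩ := hJinj.out (LinearMap.range S.g.hom).subtype
      (Submodule.injective_subtype _) m
    rw [QuotientAddGroup.eq_zero_iff]
    refine ⟨χ, Subtype.ext ?_⟩
    show χ.comp S.g.hom = ψ'
    ext x
    have h1 : χ (S.g x) = m ⟨S.g x, LinearMap.mem_range_self _ x⟩ :=
      hχ ⟨S.g x, LinearMap.mem_range_self _ x⟩
    have h2 : e₀.symm ⟨S.g x, LinearMap.mem_range_self _ x⟩ = Submodule.Quotient.mk x :=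
      LinearMap.quotKerEquivRange_symm_apply_image _ x (LinearMap.mem_range_self _ x)
    show χ (S.g x) = ψ' x
    rw [h1]
    show k (e₀.symm ⟨S.g x, LinearMap.mem_range_self _ x⟩) = _
    rw [h2]
    rfl

lemma eQuot_surjective (hJinj : Module.Injective R J)
    (S : CategoryTheory.ShortComplex (ModuleCat.{0} R)) :
    Function.Surjective (eQuot (J := J) S) := by
  intro h
  obtain ⟨ψ, hψ⟩ := hJinj.out (LinearMap.ker S.g.hom).subtype (Submodule.injective_subtype _)
    ((h : (_ ⧸ LinearMap.range S.moduleCatToCycles) →ₗ[R] J).comp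
      (LinearMap.range S.moduleCatToCycles).mkQ)
  have hmem : ψ.comp S.f.hom = 0 := by
    ext a
    have h0 : S.g (S.f a) = 0 := S.moduleCat_zero_apply a
    have h1 : ψ (S.f a) = h (Submodule.Quotient.mk (S.moduleCatToCycles a)) :=
      hψ ⟨S.f a, h0⟩
    have h2 : (Submodule.Quotient.mk (S.moduleCatToCycles a) :
        _ ⧸ LinearMap.range S.moduleCatToCycles) = 0 :=
      (Submodule.Quotient.mk_eq_zero _).2 ⟨a, rfl⟩
    show ψ (S.f a) = 0
    rw [h1, h2, map_zero]
  have hmemker : ψ ∈ AddMonoidHom.ker (dualSC S (ModuleCat.of R J)).g.hom := by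
    refine AddMonoidHom.mem_ker.2 ?_
    exact hmem
  refine ⟨QuotientAddGroup.mk
    (⟨ψ, hmemker⟩ : AddMonoidHom.ker (dualSC S (ModuleCat.of R J)).g.hom), ?_⟩
  apply Submodule.linearMap_qext
  ext x
  exact hψ x

lemma eQuot_natural {S₁ S₂ : CategoryTheory.ShortComplex (ModuleCat.{0} R)} (φ : S₁ ⟶ S₂)
    (a : AddMonoidHom.ker (dualSC S₂ (ModuleCat.of R J)).g.hom ⧸
      AddMonoidHom.range (dualSC S₂ (ModuleCat.of R J)).abToCycles) :
    eQuot S₁ (hMapAb (dualSCMap φ (ModuleCat.of R J)) a) =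
      (eQuot S₂ a).comp (hMap φ) := by
  induction a using QuotientAddGroup.induction_on with
  | H ψ =>
    apply Submodule.linearMap_qext
    ext x
    rfl

lemma bij_congr {A B C D : Type} (a : A → B) (b : C → D) (e : A ≃ C) (e' : B ≃ D)
    (h : ∀ x, e' (a x) = b (e x)) : Function.Bijective a ↔ Function.Bijective b := by
  have hb : b = e' ∘ a ∘ e.symm := by
    funext c
    rw [Function.comp_apply, Function.comp_apply, h, e.apply_symm_apply]
  constructor
  · intro ha
    rw [hb]
    exact e'.bijective.comp (ha.comp e.symm.bijective)
  · intro hbb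
    have ha : a = e'.symm ∘ b ∘ e := by
      funext x
      rw [Function.comp_apply, Function.comp_apply, ← h, e'.symm_apply_apply]
    rw [ha]
    exact e'.symm.bijective.comp (hbb.comp e.bijective)

lemma bij_precomp
    (hJcog : ∀ (M : Type) [AddCommGroup M] [Module R M] (m : M), m ≠ 0 →
      ∃ φ : M →ₗ[R] J, φ m ≠ 0)
    {M N : Type} [AddCommGroup M] [AddCommGroup N] [Module R M] [Module R N]
    (u : M →ₗ[R] N) :
    Function.Bijective u ↔ Function.Bijective (fun h : N →ₗ[R] J => h.comp u) := by
  constructor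
  · intro hu
    let e := LinearEquiv.ofBijective u hu
    constructor
    · intro h₁ h₂ h12
      ext n
      obtain ⟨m, rfl⟩ := hu.2 n
      exact LinearMap.congr_fun h12 m
    · intro k
      refine ⟨k.comp (e.symm : N →ₗ[R] M), ?_⟩
      ext m
      show k (e.symm (u m)) = k m
      have hm : u m = e m := rfl
      rw [hm, e.symm_apply_apply]
  · intro hd
    constructor
    · rw [injective_iff_map_eq_zero]
      intro m hm
      by_contra hm0
      obtain ⟨φ, hφ⟩ := hJcog M m hm0
      obtain ⟨h, hh⟩ := hd.2 φ
      apply hφ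
      have hφm : φ m = h (u m) := by rw [← hh]; rfl
      rw [hφm, hm, map_zero]
    · intro n
      by_contra hn
      have hn' : (Submodule.Quotient.mk n : N ⧸ LinearMap.range u) ≠ 0 := by
        rw [ne_eq, Submodule.Quotient.mk_eq_zero]
        exact fun ⟨m, hm⟩ => hn ⟨m, hm⟩
      obtain ⟨χ, hχ⟩ := hJcog (N ⧸ LinearMap.range u) (Submodule.Quotient.mk n) hn'
      have hz : (χ.comp (LinearMap.range u).mkQ).comp u = (0 : N →ₗ[R] J).comp u := by
        ext m
        show χ (Submodule.Quotient.mk (u m)) = 0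
        rw [(Submodule.Quotient.mk_eq_zero _).2 (LinearMap.mem_range_self u m), map_zero]
      have h0 : χ.comp (LinearMap.range u).mkQ = 0 := hd.1 hz
      apply hχ
      have hrw : χ (Submodule.Quotient.mk n) = (χ.comp (LinearMap.range u).mkQ) n := rfl
      rw [hrw, h0]
      rfl

/-- The key equivalence for short complexes. -/
lemma sc_quasiIso_iff (hJinj : Module.Injective R J)
    (hJcog : ∀ (M : Type) [AddCommGroup M] [Module R M] (m : M), m ≠ 0 →
      ∃ φ : M →ₗ[R] J, φ m ≠ 0)
    {S₁ S₂ : CategoryTheory.ShortComplex (ModuleCat.{0} R)} (φ : S₁ ⟶ S₂) :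
    CategoryTheory.ShortComplex.QuasiIso φ ↔
      CategoryTheory.ShortComplex.QuasiIso (dualSCMap φ (ModuleCat.of R J)) := by
  rw [quasiIso_iff_bijective_hMap, ab_quasiIso_iff_bijective_hMapAb]
  rw [bij_precomp hJcog (hMap φ)]
  exact (bij_congr (⇑(hMapAb (dualSCMap φ (ModuleCat.of R J))))
    (fun h : (S₂.moduleCatHomology : Type) →ₗ[R] J => h.comp (hMap φ))
    (Equiv.ofBijective _ ⟨eQuot_injective hJinj S₂, eQuot_surjective hJinj S₂⟩)
    (Equiv.ofBijective _ ⟨eQuot_injective hJinj S₁, eQuot_surjective hJinj S₁⟩)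
    (fun a => eQuot_natural φ a)).symm

end Core

/-- If `J` is an injective cogenerator of the category of left `R`-modules, then a morphism
`q : X ⟶ Y` of chain complexes of left `R`-modules is a quasi-isomorphism if and only if the
induced morphism of cochain complexes `Hom_R(Y, J) ⟶ Hom_R(X, J)` is a quasi-isomorphism. -/
theorem statement3 {R : Type} [Ring R] (J : Type) [AddCommGroup J] [Module R J]
    (hJinj : Module.Injective R J)
    (hJcog : ∀ (M : Type) [AddCommGroup M] [Module R M] (m : M), m ≠ 0 →
      ∃ φ : M →ₗ[R] J, φ m ≠ 0)
    {X Y : ChainComplex (ModuleCat.{0} R) ℤ} (q : X ⟶ Y) :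
    QuasiIso q ↔ QuasiIso (homComplexMap q (ModuleCat.of R J)) := by
  rw [quasiIso_iff, quasiIso_iff]
  apply forall_congr'
  intro n
  rw [quasiIsoAt_iff' q (n+1) n (n-1) (ChainComplex.prev ℤ n) (ChainComplex.next ℤ n),
      quasiIsoAt_iff' (homComplexMap q (ModuleCat.of R J)) (n-1) n (n+1)
        (CochainComplex.prev ℤ n) (CochainComplex.next ℤ n)]
  exact sc_quasiIso_iff hJinj hJcog
    ((HomologicalComplex.shortComplexFunctor' (ModuleCat.{0} R)
      (ComplexShape.down ℤ) (n+1) n (n-1)).map q)
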